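/- Let U_1, …, U_m be nonempty closed convex subsets of R^n with nonempty intersection U. Then for any starting point x_1 ∈ R^n, the sequence (x_k) generated by the Parallel Polyhedral Projection Method converges to a point x̄ ∈ U. -/

import Mathlib

open Metric Filter Topology

/-- `p` is the metric projection of `z` onto `X`. -/
def IsProj {n : ℕ} (X : Set (EuclideanSpace ℝ (Fin n))) (z p : EuclideanSpace ℝ (Fin n)) : Prop :=
  p ∈ X ∧ ∀ y ∈ X, dist z p ≤ dist z y

lemma isProj_inner_le {n : ℕ} {X : Set (EuclideanSpace ℝ (Fin n))}
    (hX : Convex ℝ X) {z q : EuclideanSpace ℝ (Fin n)} (h : IsProj X z q) :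
    ∀ w ∈ X, inner ℝ (z - q) (w - q) ≤ (0 : ℝ) := by
  haveI : Nonempty X := ⟨⟨q, h.1⟩⟩
  rw [← norm_eq_iInf_iff_real_inner_le_zero hX h.1]
  apply le_antisymm
  · exact le_ciInf fun w => by simpa [dist_eq_norm] using h.2 w w.2
  · refine ciInf_le ⟨0, fun r hr => ?_⟩ (⟨q, h.1⟩ : X)
    obtain ⟨w, rfl⟩ := hr
    exact norm_nonneg _

/-- Global convergence of 3PM. -/
theorem stmt5 {n m : ℕ} (U : Fin m → Set (EuclideanSpace ℝ (Fin n)))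
    (hne : ∀ i, (U i).Nonempty) (hcl : ∀ i, IsClosed (U i)) (hcv : ∀ i, Convex ℝ (U i))
    (hU : (⋂ i, U i).Nonempty)
    (x : ℕ → EuclideanSpace ℝ (Fin n)) (p : ℕ → Fin m → EuclideanSpace ℝ (Fin n))
    (hp : ∀ k i, IsProj (U i) (x k) (p k i))
    (hstep : ∀ k, IsProj
      (⋂ i, {z : EuclideanSpace ℝ (Fin n) | inner ℝ (x k - p k i) (z - p k i) ≤ (0 : ℝ)})
      (x k) (x (k + 1))) :
    ∃ xbar ∈ ⋂ i, U i, Tendsto x atTop (nhds xbar) := by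
  obtain ⟨u0, hu0⟩ := hU
  -- convexity of the polyhedral sets Ω_k
  have hΩcv : ∀ k, Convex ℝ (⋂ i, {z : EuclideanSpace ℝ (Fin n) |
      inner ℝ (x k - p k i) (z - p k i) ≤ (0:ℝ)}) := by
    intro k
    refine convex_iInter fun i => ?_
    have hset : {z : EuclideanSpace ℝ (Fin n) | inner ℝ (x k - p k i) (z - p k i) ≤ (0:ℝ)}
        = {z | (inner ℝ (x k - p k i) z : ℝ) ≤ inner ℝ (x k - p k i) (p k i)} := by
      ext z; simp [inner_sub_right, sub_nonpos]
    rw [hset]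
    exact convex_halfSpace_le
      ⟨fun a b => inner_add_right _ _ _, fun c a => real_inner_smul_right _ _ _⟩ _
  -- every point of U belongs to Ω_k
  have hUΩ : ∀ v ∈ ⋂ i, U i, ∀ k, v ∈ ⋂ i, {z : EuclideanSpace ℝ (Fin n) |
      inner ℝ (x k - p k i) (z - p k i) ≤ (0:ℝ)} := by
    intro v hv k
    exact Set.mem_iInter.2 fun i =>
      isProj_inner_le (hcv i) (hp k i) v (Set.mem_iInter.1 hv i)
  -- Fejér inequality
  have key : ∀ v ∈ ⋂ i, U i, ∀ k,
      ‖x (k+1) - v‖^2 + ‖x k - x (k+1)‖^2 ≤ ‖x k - v‖^2 := by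
    intro v hv k
    have h1 : inner ℝ (x k - x (k+1)) (v - x (k+1)) ≤ (0:ℝ) :=
      isProj_inner_le (hΩcv k) (hstep k) v (hUΩ v hv k)
    have hsplit : x k - v = (x k - x (k+1)) + (x (k+1) - v) := by abel
    rw [hsplit, norm_add_sq_real]
    have h2 : (inner ℝ (x k - x (k+1)) (x (k+1) - v) : ℝ)
        = -(inner ℝ (x k - x (k+1)) (v - x (k+1)) : ℝ) := by
      rw [← inner_neg_right]; congr 1; abel
    rw [h2]; linarith
  -- Fejér monotonicity of distances
  have dmono : ∀ v ∈ ⋂ i, U i, ∀ k, ‖x (k+1) - v‖ ≤ ‖x k - v‖ := by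
    intro v hv k
    have h := key v hv k
    nlinarith [norm_nonneg (x (k+1) - v), norm_nonneg (x k - v), sq_nonneg ‖x k - x (k+1)‖]
  -- the squared distances to u0 converge
  set d : ℕ → ℝ := fun k => ‖x k - u0‖^2 with hd
  have hd_anti : Antitone d := by
    apply antitone_nat_of_succ_le
    intro k
    have h := key u0 hu0 k
    simp only [hd]
    nlinarith [sq_nonneg ‖x k - x (k+1)‖]
  have hd_bdd : BddBelow (Set.range d) := ⟨0, fun r hr => by
    obtain ⟨k, rfl⟩ := hr; exact sq_nonneg _⟩
  have hdL : Tendsto d atTop (𝓝 (⨅ k, d k)) := tendsto_atTop_ciInf hd_anti hd_bdd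
  have hdL' : Tendsto (fun k => d (k+1)) atTop (𝓝 (⨅ k, d k)) :=
    hdL.comp (tendsto_add_atTop_nat 1)
  have hdiff : Tendsto (fun k => d k - d (k+1)) atTop (𝓝 0) := by
    simpa using hdL.sub hdL'
  -- successive steps tend to 0
  have hsq : Tendsto (fun k => ‖x k - x (k+1)‖^2) atTop (𝓝 0) := by
    refine squeeze_zero (fun k => sq_nonneg _) (fun k => ?_) hdiff
    have h := key u0 hu0 k
    simp only [hd]; linarith
  have hstep0 : Tendsto (fun k => ‖x k - x (k+1)‖) atTop (𝓝 0) := by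
    have h := hsq.sqrt
    simpa [Real.sqrt_sq (norm_nonneg _)] using h
  -- distance to each U i is bounded by the step size
  have hpb : ∀ k i, ‖x k - p k i‖ ≤ ‖x k - x (k+1)‖ := by
    intro k i
    have hx1 := (hstep k).1
    have h1 : inner ℝ (x k - p k i) (x (k+1) - p k i) ≤ (0:ℝ) := Set.mem_iInter.1 hx1 i
    have h2 : ‖x k - p k i‖^2 ≤ inner ℝ (x k - p k i) (x k - x (k+1)) := by
      have heq : (inner ℝ (x k - p k i) (x k - x (k+1)) : ℝ)
          = inner ℝ (x k - p k i) (x k - p k i) - inner ℝ (x k - p k i) (x (k+1) - p k i) := by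
        rw [← inner_sub_right]; congr 1; abel
      rw [heq, real_inner_self_eq_norm_sq]; linarith
    have h3 := real_inner_le_norm (x k - p k i) (x k - x (k+1))
    nlinarith [norm_nonneg (x k - p k i), norm_nonneg (x k - x (k+1))]
  have hpb0 : ∀ i, Tendsto (fun k => ‖x k - p k i‖) atTop (𝓝 0) := fun i =>
    squeeze_zero (fun k => norm_nonneg _) (fun k => hpb k i) hstep0
  -- boundedness and Bolzano–Weierstrass
  have hmem : ∀ k, x k ∈ closedBall u0 (‖x 0 - u0‖) := by
    intro k
    have : ∀ k, ‖x k - u0‖ ≤ ‖x 0 - u0‖ := by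
      intro k
      induction k with
      | zero => exact le_rfl
      | succ k ih => exact (dmono u0 hu0 k).trans ih
    simpa [dist_eq_norm] using this k
  obtain ⟨a, -, φ, hφ, hconv⟩ :=
    tendsto_subseq_of_bounded (isBounded_closedBall (x := u0) (r := ‖x 0 - u0‖)) hmem
  -- the limit point lies in every U i
  have ha : a ∈ ⋂ i, U i := by
    refine Set.mem_iInter.2 fun i => ?_
    have hdiff0 : Tendsto (fun j => x (φ j) - p (φ j) i) atTop (𝓝 0) := by
      rw [tendsto_zero_iff_norm_tendsto_zero]
      exact (hpb0 i).comp hφ.tendsto_atTop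
    have hptend : Tendsto (fun j => p (φ j) i) atTop (𝓝 a) := by
      have := hconv.sub hdiff0
      simpa using this
    exact (hcl i).mem_of_tendsto hptend (Eventually.of_forall fun j => (hp (φ j) i).1)
  refine ⟨a, ha, ?_⟩
  -- Fejér monotonicity w.r.t. a + subsequence convergence gives full convergence
  have hanti : Antitone fun k => ‖x k - a‖ :=
    antitone_nat_of_succ_le fun k => dmono a ha k
  have hsub : Tendsto (fun j => ‖x (φ j) - a‖) atTop (𝓝 0) := by
    have := (hconv.sub (tendsto_const_nhds (x := a))).norm
    simpa using this
  have hall : Tendsto (fun k => ‖x k - a‖) atTop (𝓝 0) := by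
    rw [Metric.tendsto_atTop]
    intro ε hε
    obtain ⟨J, hJ⟩ := (Metric.tendsto_atTop.1 hsub) ε hε
    refine ⟨φ J, fun k hk => ?_⟩
    have h1 : ‖x k - a‖ ≤ ‖x (φ J) - a‖ := hanti hk
    have h2 := hJ J le_rfl
    rw [Real.dist_eq, sub_zero, abs_of_nonneg (norm_nonneg _)] at h2 ⊢
    linarith
  rw [tendsto_iff_norm_sub_tendsto_zero]
  exact hall
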